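/- For all positive integers k and n with 1 <= k <= n-1, M(k,n) <= H(k)·n, where H(k) is the sum of the k largest terms of the multiset {1, 1/2, 1/2, 1/3, 1/3, 1/3, 1/4, 1/4, 1/4, 1/4, ...} (i.e., 1/t repeated t times for each t >= 1), taken in order. -/

import Mathlib

/-- The simple transposition `s_i = (i, i+1)` (1-indexed values) in `S_n`,
realized on `Fin n` (0-indexed positions `i-1` and `i`); junk value `1` otherwise. -/
def sgen (n i : ℕ) : Equiv.Perm (Fin n) :=
  if h : 0 < i ∧ i < n then Equiv.swap ⟨i - 1, by omega⟩ ⟨i, h.2⟩ else 1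

/-- `l` is a reduced word for `w ∈ S_n`: its product is `w` and it has minimal length. -/
def IsReducedWordFor (n : ℕ) (l : List ℕ) (w : Equiv.Perm (Fin n)) : Prop :=
  (l.map (sgen n)).prod = w ∧
    ∀ l' : List ℕ, (l'.map (sgen n)).prod = w → l.length ≤ l'.length

/-- The longest permutation `w_0 = n (n-1) ⋯ 2 1` of `S_n`. -/
def longestPerm (n : ℕ) : Equiv.Perm (Fin n) := Fin.revPerm

/-- `M(k,n)`: the maximum multiplicity of `s_k` among reduced words of `w_0 ∈ S_n`. -/
noncomputable def Mmax (k n : ℕ) : ℕ :=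
  sSup {N | ∃ l : List ℕ, IsReducedWordFor n l (longestPerm n) ∧ l.count k = N}

/-- Two finite sets are weakly separated. -/
def WeaklySeparated (I J : Finset ℕ) : Prop :=
  (∀ a ∈ I \ J, ∀ b ∈ J \ I, a < b) ∨ (∀ b ∈ J \ I, ∀ a ∈ I \ J, b < a)

/-- A monotone weakly separated path: pairwise weakly separated, and each step removes
one element `y` and adds one element `x > y`. -/
def IsMWSPath (P : List (Finset ℕ)) : Prop :=
  (∀ A ∈ P, ∀ B ∈ P, WeaklySeparated A B) ∧
    List.Chain' (fun A B => ∃ x y, y ∈ A ∧ x ∉ A ∧ y < x ∧ B = insert x (A.erase y)) P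

/-- The `i`-th term (0-indexed) of the sequence `1, 1/2, 1/2, 1/3, 1/3, 1/3, 1/4, ...`,
i.e. `1/t` where `t` is least with `i < t(t+1)/2`. -/
noncomputable def arcTerm (i : ℕ) : ℝ :=
  1 / (Nat.find (⟨i + 1, by
    have h2 : (i + 1) * 2 ≤ (i + 1) * (i + 1 + 1) := by nlinarith
    calc i < i + 1 := Nat.lt_succ_self i
      _ = (i + 1) * 2 / 2 := by omega
      _ ≤ (i + 1) * (i + 1 + 1) / 2 := Nat.div_le_div_right h2⟩ :
      ∃ t : ℕ, i < t * (t + 1) / 2) : ℕ)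

namespace S5
variable {n : ℕ}

def Cset (n : ℕ) (π : Equiv.Perm (Fin n)) : Finset (Fin n × Fin n) :=
  Finset.univ.filter fun p => p.1 < p.2 ∧ π⁻¹ p.2 < π⁻¹ p.1

lemma mem_Cset {π : Equiv.Perm (Fin n)} {a b : Fin n} :
    (a, b) ∈ Cset n π ↔ a < b ∧ π⁻¹ b < π⁻¹ a := by
  simp [Cset]

lemma sgen_eq {q : ℕ} (hq1 : 0 < q) (hq2 : q < n) :
    sgen n q = Equiv.swap ⟨q - 1, by omega⟩ ⟨q, hq2⟩ := dif_pos ⟨hq1, hq2⟩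

lemma sgen_inv (q : ℕ) : (sgen n q)⁻¹ = sgen n q := by
  unfold sgen; split <;> simp

lemma mul_sgen_inv_apply {π : Equiv.Perm (Fin n)} {q : ℕ} (hq1 : 0 < q) (hq2 : q < n)
    (c : Fin n) :
    (π * sgen n q)⁻¹ c = Equiv.swap (⟨q - 1, by omega⟩ : Fin n) ⟨q, hq2⟩ (π⁻¹ c) := by
  rw [mul_inv_rev, sgen_inv, sgen_eq hq1 hq2, Equiv.Perm.mul_apply]

lemma swap_apply_val {q : ℕ} (hq1 : 0 < q) (hq2 : q < n) (c : Fin n) :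
    ((Equiv.swap (⟨q - 1, by omega⟩ : Fin n) ⟨q, hq2⟩) c).val =
      if c.val = q - 1 then q else if c.val = q then q - 1 else c.val := by
  rcases eq_or_ne c ⟨q - 1, by omega⟩ with h1 | h1
  · subst h1; rw [Equiv.swap_apply_left, if_pos rfl]
  · rcases eq_or_ne c ⟨q, hq2⟩ with h2 | h2
    · subst h2; rw [Equiv.swap_apply_right]
      simp only [Fin.val_mk]
      rw [if_neg (by omega)]
      simp
    · have v1 : c.val ≠ q - 1 := fun h => h1 (Fin.ext h)
      have v2 : c.val ≠ q := fun h => h2 (Fin.ext h)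
      rw [Equiv.swap_apply_of_ne_of_ne h1 h2, if_neg v1, if_neg v2]

lemma inv_eq_iff_val {π : Equiv.Perm (Fin n)} {a c : Fin n} :
    a.val = (π c).val ↔ (π⁻¹ a).val = c.val := by
  rw [← Fin.ext_iff, ← Fin.ext_iff, Equiv.Perm.inv_eq_iff_eq]

lemma toggle_lt {q : ℕ} (π : Equiv.Perm (Fin n)) (hq1 : 0 < q) (hq2 : q < n)
    (h : π ⟨q - 1, by omega⟩ < π ⟨q, hq2⟩) :
    (π ⟨q - 1, by omega⟩, π ⟨q, hq2⟩) ∉ Cset n π ∧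
      Cset n (π * sgen n q) =
        insert (π ⟨q - 1, by omega⟩, π ⟨q, hq2⟩) (Cset n π) := by
  set qm : Fin n := ⟨q - 1, by omega⟩ with hqm
  set qk : Fin n := ⟨q, hq2⟩ with hqk
  have notmem : (π qm, π qk) ∉ Cset n π := by
    rw [mem_Cset]
    rintro ⟨-, hlt⟩
    rw [Fin.lt_def] at hlt
    simp only [Equiv.Perm.inv_def, Equiv.symm_apply_apply] at hlt
    have h1 : qk.val = q := rfl
    have h2 : qm.val = q - 1 := rfl
    omega
  refine ⟨notmem, ?_⟩
  ext ⟨a, b⟩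
  rw [Finset.mem_insert]
  have f1 : a.val = (π qm).val ↔ (π⁻¹ a).val = q - 1 := inv_eq_iff_val
  have f2 : b.val = (π qk).val ↔ (π⁻¹ b).val = q := inv_eq_iff_val
  have f3 : a.val = (π qk).val ↔ (π⁻¹ a).val = q := inv_eq_iff_val
  have f4 : b.val = (π qm).val ↔ (π⁻¹ b).val = q - 1 := inv_eq_iff_val
  have e5 : (π qm).val < (π qk).val := h
  rw [mem_Cset, mem_Cset, mul_sgen_inv_apply hq1 hq2, mul_sgen_inv_apply hq1 hq2,
    Prod.mk.injEq, Fin.lt_def, Fin.lt_def, Fin.lt_def, Fin.ext_iff, Fin.ext_iff,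
    swap_apply_val hq1 hq2, swap_apply_val hq1 hq2]
  split_ifs <;> omega

lemma toggle_gt {q : ℕ} (π : Equiv.Perm (Fin n)) (hq1 : 0 < q) (hq2 : q < n)
    (h : π ⟨q, hq2⟩ < π ⟨q - 1, by omega⟩) :
    (π ⟨q, hq2⟩, π ⟨q - 1, by omega⟩) ∈ Cset n π ∧
      Cset n (π * sgen n q) =
        (Cset n π).erase (π ⟨q, hq2⟩, π ⟨q - 1, by omega⟩) := by
  set qm : Fin n := ⟨q - 1, by omega⟩ with hqm
  set qk : Fin n := ⟨q, hq2⟩ with hqk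
  have mem : (π qk, π qm) ∈ Cset n π := by
    rw [mem_Cset]
    refine ⟨h, ?_⟩
    rw [Fin.lt_def]
    simp only [Equiv.Perm.inv_def, Equiv.symm_apply_apply]
    show (qm : ℕ) < (qk : ℕ)
    have h1 : qk.val = q := rfl
    have h2 : qm.val = q - 1 := rfl
    omega
  refine ⟨mem, ?_⟩
  ext ⟨a, b⟩
  rw [Finset.mem_erase]
  have f1 : a.val = (π qm).val ↔ (π⁻¹ a).val = q - 1 := inv_eq_iff_val
  have f2 : b.val = (π qk).val ↔ (π⁻¹ b).val = q := inv_eq_iff_val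
  have f3 : a.val = (π qk).val ↔ (π⁻¹ a).val = q := inv_eq_iff_val
  have f4 : b.val = (π qm).val ↔ (π⁻¹ b).val = q - 1 := inv_eq_iff_val
  have e5 : (π qk).val < (π qm).val := h
  rw [mem_Cset, mem_Cset, mul_sgen_inv_apply hq1 hq2, mul_sgen_inv_apply hq1 hq2,
    Ne, Prod.mk.injEq, Fin.lt_def, Fin.lt_def, Fin.lt_def, Fin.ext_iff, Fin.ext_iff,
    swap_apply_val hq1 hq2, swap_apply_val hq1 hq2]
  split_ifs <;> omega


lemma Cset_one : Cset n 1 = ∅ := by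
  ext ⟨a, b⟩
  simp only [mem_Cset, Finset.notMem_empty, iff_false, not_and]
  intro h h2
  simp at h2
  exact absurd (h.trans h2) (lt_irrefl _)

lemma sgen_mul_self (q : ℕ) : sgen n q * sgen n q = 1 := by
  unfold sgen; split <;> simp

lemma perm_eq_one_of_strictMono (f : Equiv.Perm (Fin n)) (hm : StrictMono (⇑f)) : f = 1 := by
  haveI : WellFoundedLT (Fin n) := inferInstance
  have h2 : Set.range ⇑f = Set.range (id : Fin n → Fin n) := by
    simp [f.surjective.range_eq]
  have h3 := (StrictMono.range_inj (β := Fin n) (γ := Fin n) hm strictMono_id).1 h2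
  exact Equiv.Perm.ext fun x => congrFun h3 x

lemma eq_one_of_Cset_empty (π : Equiv.Perm (Fin n)) (h : Cset n π = ∅) : π = 1 := by
  have hm : StrictMono (⇑π⁻¹) := by
    intro a b hab
    rcases lt_trichotomy (π⁻¹ a) (π⁻¹ b) with h1 | h1 | h1
    · exact h1
    · exact absurd (π⁻¹.injective h1) (ne_of_lt hab)
    · exfalso
      have : (a, b) ∈ Cset n π := mem_Cset.mpr ⟨hab, h1⟩
      rw [h] at this
      exact absurd this (Finset.notMem_empty _)
  have h1 := perm_eq_one_of_strictMono π⁻¹ hm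
  rw [← inv_inv π, h1, inv_one]

lemma exists_descent (π : Equiv.Perm (Fin n)) (h : π ≠ 1) :
    ∃ q, 0 < q ∧ ∃ hq2 : q < n, π ⟨q, hq2⟩ < π ⟨q - 1, by omega⟩ := by
  by_contra hc
  push_neg at hc
  apply h
  apply perm_eq_one_of_strictMono
  rcases n with _ | m
  · intro a; exact absurd a.2 (by omega)
  · rw [Fin.strictMono_iff_lt_succ]
    intro i
    have h2 : i.val + 1 < m + 1 := by omega
    have hc' := hc (i.val + 1) (by omega) h2
    have e1 : (⟨i.val + 1 - 1, by omega⟩ : Fin (m + 1)) = Fin.castSucc i := Fin.ext (by simp)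
    have e2 : (⟨i.val + 1, h2⟩ : Fin (m + 1)) = Fin.succ i := Fin.ext rfl
    rw [e1, e2] at hc'
    rcases lt_trichotomy (π (Fin.castSucc i)) (π (Fin.succ i)) with h1 | h1 | h1
    · exact h1
    · exfalso
      have := π.injective h1
      have hv : (Fin.castSucc i).val = (Fin.succ i).val := congrArg Fin.val this
      simp [Fin.val_succ] at hv
    · exact absurd h1 (not_lt.mpr hc')

lemma exists_word : ∀ (N : ℕ) (π : Equiv.Perm (Fin n)), (Cset n π).card = N →
    ∃ l : List ℕ, (l.map (sgen n)).prod = π ∧ l.length = N := by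
  intro N
  induction N with
  | zero =>
    intro π h
    have h1 : π = 1 := eq_one_of_Cset_empty π (Finset.card_eq_zero.mp h)
    exact ⟨[], by simp [h1], rfl⟩
  | succ N ih =>
    intro π h
    have hπ : π ≠ 1 := by
      rintro rfl
      rw [Cset_one] at h
      simp at h
    obtain ⟨q, hq1, hq2, hlt⟩ := exists_descent π hπ
    obtain ⟨hmem, heq⟩ := toggle_gt π hq1 hq2 hlt
    have hcard : (Cset n (π * sgen n q)).card = N := by
      rw [heq, Finset.card_erase_of_mem hmem, h]
      rfl
    obtain ⟨l, hl, hlen⟩ := ih (π * sgen n q) hcard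
    refine ⟨l ++ [q], ?_, by simp [hlen]⟩
    rw [List.map_append, List.prod_append]
    simp only [List.map_cons, List.map_nil, List.prod_cons, List.prod_nil, mul_one, hl]
    rw [mul_assoc, sgen_mul_self, mul_one]


variable (n) in
/-- prefix permutation (positions → wires) after `i` letters -/
def Pp (l : List ℕ) (i : ℕ) : Equiv.Perm (Fin n) := ((l.take i).map (sgen n)).prod

lemma Pp_zero (l : List ℕ) : Pp n l 0 = 1 := by simp [Pp]

lemma Pp_succ (l : List ℕ) (i : ℕ) (hi : i < l.length) :
    Pp n l (i + 1) = Pp n l i * sgen n (l.getD i 0) := by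
  rw [Pp, Pp, List.take_succ, List.map_append, List.prod_append]
  rw [List.getElem?_eq_getElem hi, List.getD_eq_getElem l 0 hi]
  simp

lemma Pp_ge (l : List ℕ) (i : ℕ) (hi : l.length ≤ i) : Pp n l i = Pp n l l.length := by
  rw [Pp, Pp, List.take_of_length_le hi, List.take_length]

lemma Pp_top (l : List ℕ) : Pp n l l.length = (l.map (sgen n)).prod := by
  rw [Pp, List.take_length]

lemma card_step (π : Equiv.Perm (Fin n)) (q : ℕ) :
    (Cset n (π * sgen n q)).card ≤ (Cset n π).card + 1 := by
  by_cases hv : 0 < q ∧ q < n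
  · obtain ⟨hq1, hq2⟩ := hv
    rcases lt_trichotomy (π ⟨q - 1, by omega⟩) (π ⟨q, hq2⟩) with h1 | h1 | h1
    · obtain ⟨hnm, heq⟩ := toggle_lt π hq1 hq2 h1
      rw [heq, Finset.card_insert_of_notMem hnm]
    · exfalso
      have := π.injective h1
      have hv2 := congrArg Fin.val this
      simp only [Fin.val_mk] at hv2
      omega
    · obtain ⟨hmem, heq⟩ := toggle_gt π hq1 hq2 h1
      rw [heq, Finset.card_erase_of_mem hmem]
      omega
  · rw [show sgen n q = 1 from dif_neg hv, mul_one]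
    omega

lemma step_insert (π : Equiv.Perm (Fin n)) (q : ℕ)
    (h : (Cset n (π * sgen n q)).card = (Cset n π).card + 1) :
    ∃ (hq1 : 0 < q) (hq2 : q < n),
      π ⟨q - 1, by omega⟩ < π ⟨q, hq2⟩ ∧
      Cset n (π * sgen n q) =
        insert (π ⟨q - 1, by omega⟩, π ⟨q, hq2⟩) (Cset n π) := by
  by_cases hv : 0 < q ∧ q < n
  · obtain ⟨hq1, hq2⟩ := hv
    rcases lt_trichotomy (π ⟨q - 1, by omega⟩) (π ⟨q, hq2⟩) with h1 | h1 | h1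
    · obtain ⟨hnm, heq⟩ := toggle_lt π hq1 hq2 h1
      exact ⟨hq1, hq2, h1, heq⟩
    · exfalso
      have := π.injective h1
      have hv2 := congrArg Fin.val this
      simp only [Fin.val_mk] at hv2
      omega
    · obtain ⟨hmem, heq⟩ := toggle_gt π hq1 hq2 h1
      rw [heq, Finset.card_erase_of_mem hmem] at h
      have : (Cset n π).card ≠ 0 := by
        intro h0
        rw [Finset.card_eq_zero] at h0
        rw [h0] at hmem
        exact absurd hmem (Finset.notMem_empty _)
      omega
  · rw [show sgen n q = 1 from dif_neg hv, mul_one] at h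
    omega

section Minimal

variable {l : List ℕ} {π₀ : Equiv.Perm (Fin n)}
variable (hprod : (l.map (sgen n)).prod = π₀)
variable (hmin : ∀ l' : List ℕ, (l'.map (sgen n)).prod = π₀ → l.length ≤ l'.length)

include hprod hmin in
lemma card_Cset_Pp : ∀ i, i ≤ l.length → (Cset n (Pp n l i)).card = i := by
  have up : ∀ i, (Cset n (Pp n l i)).card ≤ i := by
    intro i
    induction i with
    | zero => rw [Pp_zero, Cset_one]; simp
    | succ i ih =>
      by_cases hi : i < l.length
      · rw [Pp_succ l i hi]
        have := card_step (Pp n l i) (l.getD i 0)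
        omega
      · have e1 : Pp n l (i + 1) = Pp n l i := by
          rw [Pp_ge l (i+1) (by omega), Pp_ge l i (by omega)]
        rw [e1]; omega
  have hm : (Cset n (Pp n l l.length)).card = l.length := by
    have h1 : Pp n l l.length = π₀ := by rw [Pp_top, hprod]
    obtain ⟨l', hl', hlen'⟩ := exists_word (Cset n π₀).card π₀ rfl
    have hx := hmin l' hl'
    have up' := up l.length
    rw [h1] at up' ⊢
    omega
  have down : ∀ j, j ≤ l.length →
      l.length - j ≤ (Cset n (Pp n l (l.length - j))).card := by
    intro j
    induction j with
    | zero => simp [hm]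
    | succ j ih =>
      intro hj
      have hij : l.length - (j + 1) < l.length := by omega
      have hstep : (Cset n (Pp n l (l.length - (j+1) + 1))).card ≤
          (Cset n (Pp n l (l.length - (j+1)))).card + 1 := by
        rw [Pp_succ l _ hij]
        exact card_step _ _
      have he : l.length - (j + 1) + 1 = l.length - j := by omega
      rw [he] at hstep
      have := ih (by omega)
      omega
  intro i hi
  have h1 := up i
  have h2 := down (l.length - i) (by omega)
  rw [show l.length - (l.length - i) = i by omega] at h2
  omega

include hprod hmin in
lemma min_step : ∀ i, i < l.length →
    ∃ (hq1 : 0 < l.getD i 0) (hq2 : l.getD i 0 < n),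
      Pp n l i ⟨l.getD i 0 - 1, by omega⟩ < Pp n l i ⟨l.getD i 0, hq2⟩ ∧
      Cset n (Pp n l (i + 1)) =
        insert (Pp n l i ⟨l.getD i 0 - 1, by omega⟩, Pp n l i ⟨l.getD i 0, hq2⟩)
          (Cset n (Pp n l i)) := by
  intro i hi
  rw [Pp_succ l i hi]
  apply step_insert
  rw [← Pp_succ l i hi, card_Cset_Pp hprod hmin i (by omega),
    card_Cset_Pp hprod hmin (i+1) (by omega)]

include hprod hmin in
lemma Cset_mono : ∀ s t, s ≤ t → Cset n (Pp n l s) ⊆ Cset n (Pp n l t) := by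
  have one : ∀ i, Cset n (Pp n l i) ⊆ Cset n (Pp n l (i + 1)) := by
    intro i
    by_cases hi : i < l.length
    · obtain ⟨hq1, hq2, hlt, heq⟩ := min_step hprod hmin i hi
      rw [heq]
      exact Finset.subset_insert _ _
    · have e1 : Pp n l (i + 1) = Pp n l i := by
        rw [Pp_ge l (i+1) (by omega), Pp_ge l i (by omega)]
      rw [e1]
    
  intro s t hst
  induction t with
  | zero =>
    rw [Nat.le_zero] at hst; subst hst
    exact Finset.Subset.refl _
  | succ t ih =>
    rcases Nat.lt_or_ge s (t+1) with h1 | h1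
    · exact (ih (by omega)).trans (one t)
    · rw [Nat.le_antisymm hst h1]

end Minimal

variable (n) in
/-- set of wires occupying positions `0..k-1` at time `i` -/
def Lset (k : ℕ) (l : List ℕ) (i : ℕ) : Finset (Fin n) :=
  Finset.univ.filter fun w => ((Pp n l i)⁻¹ w).val < k

lemma mem_Lset {k : ℕ} {l : List ℕ} {i : ℕ} {w : Fin n} :
    w ∈ Lset n k l i ↔ ((Pp n l i)⁻¹ w).val < k := by
  simp [Lset]

lemma card_Lset {k : ℕ} (hkn : k ≤ n) (l : List ℕ) (i : ℕ) : (Lset n k l i).card = k := by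
  have himg : Lset n k l i =
      (Finset.attachFin (Finset.range k)
        (fun m hm => lt_of_lt_of_le (Finset.mem_range.mp hm) hkn)).image (Pp n l i) := by
    ext w
    simp only [mem_Lset, Finset.mem_image, Finset.mem_attachFin, Finset.mem_range]
    constructor
    · intro h
      exact ⟨(Pp n l i)⁻¹ w, h, by simp⟩
    · rintro ⟨p, hp, rfl⟩
      simpa using hp
  rw [himg, Finset.card_image_of_injective _ (Equiv.injective _), Finset.card_attachFin,
    Finset.card_range]

section Minimal2

variable {l : List ℕ} {π₀ : Equiv.Perm (Fin n)} {k : ℕ}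
variable (hprod : (l.map (sgen n)).prod = π₀)
variable (hmin : ∀ l' : List ℕ, (l'.map (sgen n)).prod = π₀ → l.length ≤ l'.length)
variable (hk1 : 0 < k) (hkn : k < n)

include hprod hmin hk1 hkn in
lemma Lset_step_k (i : ℕ) (hi : i < l.length) (hq : l.getD i 0 = k) :
    ∃ x y : Fin n, y.val < x.val ∧
      x ∉ Lset n k l i ∧ y ∈ Lset n k l i ∧
      Lset n k l (i + 1) = insert x ((Lset n k l i).erase y) ∧
      x.val = (Pp n l i ⟨k, hkn⟩).val ∧ y.val = (Pp n l i ⟨k - 1, by omega⟩).val := by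
  have hkm : k - 1 < n := by omega
  obtain ⟨hq1, hq2, hlt, -⟩ := min_step hprod hmin i hi
  have ex : (⟨l.getD i 0, hq2⟩ : Fin n) = ⟨k, hkn⟩ := Fin.ext hq
  have ey : (⟨l.getD i 0 - 1, by omega⟩ : Fin n) = ⟨k - 1, hkm⟩ := Fin.ext (by
    simp only [Fin.val_mk]; omega)
  rw [ex, ey] at hlt
  set π := Pp n l i with hπ
  refine ⟨π ⟨k, hkn⟩, π ⟨k - 1, hkm⟩, hlt, ?_, ?_, ?_, rfl, rfl⟩
  · rw [mem_Lset, ← hπ]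
    simp only [Equiv.Perm.inv_def, Equiv.symm_apply_apply, Fin.val_mk]
    omega
  · rw [mem_Lset, ← hπ]
    simp only [Equiv.Perm.inv_def, Equiv.symm_apply_apply, Fin.val_mk]
    omega
  · ext w
    have f3 : w.val = (π ⟨k, hkn⟩).val ↔ (π⁻¹ w).val = k := inv_eq_iff_val
    have f1 : w.val = (π ⟨k - 1, hkm⟩).val ↔ (π⁻¹ w).val = k - 1 := inv_eq_iff_val
    rw [mem_Lset, Pp_succ l i hi, ← hπ, mul_sgen_inv_apply hq1 hq2, swap_apply_val hq1 hq2,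
      Finset.mem_insert, Finset.mem_erase, mem_Lset, ← hπ]
    simp only [Ne, Fin.ext_iff]
    rw [f3, f1]
    have hltv : (π ⟨k - 1, hkm⟩).val < (π ⟨k, hkn⟩).val := hlt
    split_ifs <;> omega

include hprod hmin in
lemma Lset_step_ne (i : ℕ) (hi : i < l.length) (hq : l.getD i 0 ≠ k) :
    Lset n k l (i + 1) = Lset n k l i := by
  obtain ⟨hq1, hq2, -, -⟩ := min_step hprod hmin i hi
  ext w
  rw [mem_Lset, Pp_succ l i hi, mul_sgen_inv_apply hq1 hq2, swap_apply_val hq1 hq2, mem_Lset]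
  split_ifs <;> omega

omit hprod hmin in
lemma Lset_stable (i : ℕ) (hi : l.length ≤ i) : Lset n k l i = Lset n k l l.length := by
  ext w
  rw [mem_Lset, mem_Lset, Pp_ge l i hi]

include hprod hmin in
lemma wsep (s t : ℕ) (hst : s ≤ t) (a b : Fin n)
    (ha1 : a ∈ Lset n k l s) (ha2 : a ∉ Lset n k l t)
    (hb1 : b ∈ Lset n k l t) (hb2 : b ∉ Lset n k l s) : a.val < b.val := by
  rw [mem_Lset] at ha1 hb1
  rw [mem_Lset] at ha2 hb2
  push_neg at ha2 hb2
  rcases lt_trichotomy a.val b.val with h1 | h1 | h1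
  · exact h1
  · exfalso
    have : a = b := Fin.ext h1
    subst this
    omega
  · exfalso
    have hmem : (b, a) ∈ Cset n (Pp n l s) := by
      rw [mem_Cset, Fin.lt_def, Fin.lt_def]
      exact ⟨h1, by omega⟩
    have hmem2 := Cset_mono hprod hmin s t hst hmem
    rw [mem_Cset, Fin.lt_def, Fin.lt_def] at hmem2
    omega


include hprod hmin hk1 hkn in
lemma g_step (v i : ℕ) :
    (((Lset n k l i).filter fun w => v ≤ w.val).card ≤
      ((Lset n k l (i + 1)).filter fun w => v ≤ w.val).card) ∧
    (i < l.length → l.getD i 0 = k →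
      (Pp n l i ⟨k - 1, by omega⟩).val < v → v ≤ (Pp n l i ⟨k, hkn⟩).val →
      ((Lset n k l i).filter fun w => v ≤ w.val).card + 1 ≤
        ((Lset n k l (i + 1)).filter fun w => v ≤ w.val).card) := by
  by_cases hi : i < l.length
  · by_cases hq : l.getD i 0 = k
    · obtain ⟨x, y, hyx, hxn, hym, heq, hxv, hyv⟩ := Lset_step_k hprod hmin hk1 hkn i hi hq
      rw [heq, Finset.filter_insert]
      by_cases hvx : v ≤ x.val
      · rw [if_pos hvx]
        have hxe : x ∉ ((Lset n k l i).erase y).filter fun w => v ≤ w.val := by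
          intro hmem
          exact hxn (Finset.mem_of_mem_erase (Finset.mem_filter.mp hmem).1)
        rw [Finset.card_insert_of_notMem hxe, Finset.filter_erase]
        by_cases hvy : v ≤ y.val
        · have hymem : y ∈ (Lset n k l i).filter fun w => v ≤ w.val :=
            Finset.mem_filter.mpr ⟨hym, hvy⟩
          rw [Finset.card_erase_of_mem hymem]
          have hpos : 0 < ((Lset n k l i).filter fun w => v ≤ w.val).card :=
            Finset.card_pos.mpr ⟨y, hymem⟩
          refine ⟨by omega, fun _ _ hyv2 _ => ?_⟩
          rw [← hyv] at hyv2
          omega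
        · rw [Finset.erase_eq_of_notMem
            (s := (Lset n k l i).filter fun w => v ≤ w.val) (a := y)
            (fun h => hvy (Finset.mem_filter.mp h).2)]
          exact ⟨by omega, fun _ _ _ _ => by omega⟩
      · rw [if_neg hvx]
        have hvy : ¬ v ≤ y.val := by omega
        rw [Finset.filter_erase, Finset.erase_eq_of_notMem
          (s := (Lset n k l i).filter fun w => v ≤ w.val) (a := y)
          (fun h => hvy (Finset.mem_filter.mp h).2)]
        refine ⟨le_refl _, fun _ _ _ hvx2 => ?_⟩
        rw [← hxv] at hvx2
        exact absurd hvx2 hvx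
    · rw [Lset_step_ne hprod hmin i hi hq]
      exact ⟨le_refl _, fun _ hq2 => absurd hq2 hq⟩
  · have he : Lset n k l (i + 1) = Lset n k l i := by
      rw [Lset_stable (i + 1) (by omega), Lset_stable i (by omega)]
    rw [he]
    exact ⟨le_refl _, fun hi2 => absurd hi2 hi⟩

include hprod hmin hk1 hkn in
lemma Sv_card (v : ℕ) :
    ((((Finset.range l.length).filter fun i => l.getD i 0 = k).filter fun i =>
        (Pp n l i ⟨k - 1, by omega⟩).val < v ∧ v ≤ (Pp n l i ⟨k, hkn⟩).val).card) ≤ k := by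
  set Sv := (((Finset.range l.length).filter fun i => l.getD i 0 = k).filter fun i =>
    (Pp n l i ⟨k - 1, by omega⟩).val < v ∧ v ≤ (Pp n l i ⟨k, hkn⟩).val) with hSv
  have gk : ∀ i, ((Lset n k l i).filter fun w => v ≤ w.val).card ≤ k := fun i =>
    le_trans (Finset.card_filter_le _ _) (le_of_eq (card_Lset (le_of_lt hkn) l i))
  have aux : ∀ j, (Sv.filter fun i => i < j).card ≤
      ((Lset n k l j).filter fun w => v ≤ w.val).card := by
    intro j
    induction j with
    | zero =>
      have h0 : Sv.filter (fun i => i < 0) = ∅ :=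
        Finset.filter_false_of_mem (fun i _ => by omega)
      rw [h0]
      simp
    | succ j ihj =>
      obtain ⟨hg1, hg2⟩ := g_step hprod hmin hk1 hkn v j
      by_cases hj : j ∈ Sv
      · have hfe : Sv.filter (fun i => i < j + 1) = insert j (Sv.filter fun i => i < j) := by
          ext a
          simp only [Finset.mem_insert, Finset.mem_filter]
          constructor
          · rintro ⟨ha, hlt⟩
            rcases Nat.lt_or_ge a j with h | h
            · exact Or.inr ⟨ha, h⟩
            · exact Or.inl (by omega)
          · rintro (rfl | ⟨ha, hlt⟩)
            · exact ⟨hj, by omega⟩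
            · exact ⟨ha, by omega⟩
        have hjn : j ∉ Sv.filter fun i => i < j := by
          intro hmem
          have := (Finset.mem_filter.mp hmem).2
          omega
        rw [hfe, Finset.card_insert_of_notMem hjn]
        obtain ⟨hj1, hj2⟩ := Finset.mem_filter.mp hj
        obtain ⟨hj3, hj4⟩ := Finset.mem_filter.mp hj1
        exact le_trans (by omega) (hg2 (Finset.mem_range.mp hj3) hj4 hj2.1 hj2.2)
      · have hfe : Sv.filter (fun i => i < j + 1) = Sv.filter fun i => i < j := by
          ext a
          simp only [Finset.mem_filter]
          constructor
          · rintro ⟨ha, hlt⟩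
            refine ⟨ha, ?_⟩
            rcases Nat.lt_or_ge a j with h | h
            · exact h
            · exfalso; have : a = j := by omega
              exact hj (this ▸ ha)
          · rintro ⟨ha, hlt⟩
            exact ⟨ha, by omega⟩
        rw [hfe]
        exact le_trans ihj hg1
  have hfin : Sv.filter (fun i => i < l.length) = Sv := by
    apply Finset.filter_true_of_mem
    intro i hi
    exact Finset.mem_range.mp (Finset.mem_filter.mp (Finset.mem_filter.mp hi).1).1
  calc Sv.card = (Sv.filter fun i => i < l.length).card := by rw [hfin]
    _ ≤ _ := aux l.length
    _ ≤ k := gk l.length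

include hprod hmin hk1 hkn in
lemma step_inj (i i' : ℕ) (hii : i < i') (hi' : i' < l.length)
    (hq : l.getD i 0 = k) (hq' : l.getD i' 0 = k)
    (hx : (Pp n l i ⟨k, hkn⟩).val = (Pp n l i' ⟨k, hkn⟩).val)
    (hy : (Pp n l i ⟨k - 1, by omega⟩).val = (Pp n l i' ⟨k - 1, by omega⟩).val) : False := by
  have hi : i < l.length := lt_trans hii hi'
  obtain ⟨x, y, hyx, hxn, hym, heq, hxv, hyv⟩ := Lset_step_k hprod hmin hk1 hkn i hi hq
  obtain ⟨x', y', hyx', hxn', hym', heq', hxv', hyv'⟩ :=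
    Lset_step_k hprod hmin hk1 hkn i' hi' hq'
  have hxx : x = x' := Fin.ext (by omega)
  have hyy : y = y' := Fin.ext (by omega)
  have hx1 : x ∈ Lset n k l (i + 1) := by
    rw [heq]; exact Finset.mem_insert_self _ _
  have hy1 : y ∉ Lset n k l (i + 1) := by
    rw [heq]
    intro hmem
    rcases Finset.mem_insert.mp hmem with h | h
    · have := congrArg Fin.val h
      omega
    · exact (Finset.notMem_erase _ _) h
  have hx2 : x ∉ Lset n k l i' := hxx ▸ hxn'
  have hy2 : y ∈ Lset n k l i' := hyy ▸ hym'
  have := wsep hprod hmin (i + 1) i' (by omega) x y hx1 hx2 hy2 hy1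
  omega

include hprod hmin hk1 hkn in
lemma Sv_filter_d (v D : ℕ) :
    2 * ((((Finset.range l.length).filter fun i => l.getD i 0 = k).filter fun i =>
        (Pp n l i ⟨k - 1, by omega⟩).val < v ∧ v ≤ (Pp n l i ⟨k, hkn⟩).val).filter fun i =>
        (Pp n l i ⟨k, hkn⟩).val - (Pp n l i ⟨k - 1, by omega⟩).val ≤ D).card ≤ D * (D + 1) := by
  classical
  set F := ((((Finset.range l.length).filter fun i => l.getD i 0 = k).filter fun i =>
    (Pp n l i ⟨k - 1, by omega⟩).val < v ∧ v ≤ (Pp n l i ⟨k, hkn⟩).val).filter fun i =>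
    (Pp n l i ⟨k, hkn⟩).val - (Pp n l i ⟨k - 1, by omega⟩).val ≤ D) with hF
  set R := (Finset.range D).biUnion
    (fun t => (Finset.range (t + 1)).image fun r => (t, r)) with hR
  have hcardR : 2 * R.card = D * (D + 1) := by
    rw [hR, Finset.card_biUnion]
    · have hinner : ∀ t, ((Finset.range (t + 1)).image fun r => (t, r)).card = t + 1 := by
        intro t
        rw [Finset.card_image_of_injective _ (fun a b hab => (Prod.mk.injEq _ _ _ _).mp hab |>.2),
          Finset.card_range]
      rw [Finset.sum_congr rfl fun t _ => hinner t]
      have hg : ∀ m : ℕ, 2 * (∑ t ∈ Finset.range m, (t + 1)) = m * (m + 1) := by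
        intro m
        induction m with
        | zero => simp
        | succ m ihm =>
          rw [Finset.sum_range_succ]
          have hexp : (m + 1) * (m + 1 + 1) = m * (m + 1) + 2 * (m + 1) := by ring
          omega
      exact hg D
    · intro a _ b _ hab
      simp only [Finset.disjoint_left, Finset.mem_image, Finset.mem_range]
      rintro ⟨t, r⟩ ⟨r1, hr1, he1⟩ ⟨r2, hr2, he2⟩
      obtain ⟨rfl, -⟩ := Prod.mk.injEq _ _ _ _ |>.mp he1
      obtain ⟨rfl, -⟩ := Prod.mk.injEq _ _ _ _ |>.mp he2
      exact hab rfl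
  have hinj : ∀ i ∈ F, ∀ i' ∈ F,
      ((Pp n l i ⟨k, hkn⟩).val - (Pp n l i ⟨k - 1, by omega⟩).val - 1,
        (Pp n l i ⟨k, hkn⟩).val - v) =
      ((Pp n l i' ⟨k, hkn⟩).val - (Pp n l i' ⟨k - 1, by omega⟩).val - 1,
        (Pp n l i' ⟨k, hkn⟩).val - v) → i = i' := by
    intro i hiF i' hiF' hpair
    obtain ⟨hd, hx⟩ := Prod.mk.injEq _ _ _ _ |>.mp hpair
    obtain ⟨hi1, hi2⟩ := Finset.mem_filter.mp hiF
    obtain ⟨hi3, hi4⟩ := Finset.mem_filter.mp hi1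
    obtain ⟨hi5, hi6⟩ := Finset.mem_filter.mp hi3
    obtain ⟨hi1', hi2'⟩ := Finset.mem_filter.mp hiF'
    obtain ⟨hi3', hi4'⟩ := Finset.mem_filter.mp hi1'
    obtain ⟨hi5', hi6'⟩ := Finset.mem_filter.mp hi3'
    have hxeq : (Pp n l i ⟨k, hkn⟩).val = (Pp n l i' ⟨k, hkn⟩).val := by omega
    have hyeq : (Pp n l i ⟨k - 1, by omega⟩).val = (Pp n l i' ⟨k - 1, by omega⟩).val := by
      omega
    by_contra hne
    rcases Nat.lt_or_ge i i' with h | h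
    · exact step_inj hprod hmin hk1 hkn i i' h (Finset.mem_range.mp hi5') hi6 hi6' hxeq hyeq
    · have h2 : i' < i := by omega
      exact step_inj hprod hmin hk1 hkn i' i h2 (Finset.mem_range.mp hi5) hi6' hi6
        hxeq.symm hyeq.symm
  have hmaps : ∀ i ∈ F,
      ((Pp n l i ⟨k, hkn⟩).val - (Pp n l i ⟨k - 1, by omega⟩).val - 1,
        (Pp n l i ⟨k, hkn⟩).val - v) ∈ R := by
    intro i hiF
    obtain ⟨hi1, hi2⟩ := Finset.mem_filter.mp hiF
    obtain ⟨hi3, hi4⟩ := Finset.mem_filter.mp hi1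
    rw [hR, Finset.mem_biUnion]
    refine ⟨(Pp n l i ⟨k, hkn⟩).val - (Pp n l i ⟨k - 1, by omega⟩).val - 1, ?_, ?_⟩
    · rw [Finset.mem_range]
      omega
    · rw [Finset.mem_image]
      refine ⟨(Pp n l i ⟨k, hkn⟩).val - v, ?_, rfl⟩
      rw [Finset.mem_range]
      omega
  have hcard : F.card ≤ R.card := Finset.card_le_card_of_injOn _ hmaps
    (fun i hi i' hi' => hinj i hi i' hi')
  omega

end Minimal2

lemma count_eq_card (l : List ℕ) (k : ℕ) :
    l.count k = ((Finset.range l.length).filter fun i => l.getD i 0 = k).card := by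
  induction l using List.reverseRecOn with
  | nil => simp
  | append_singleton l a ihl =>
    rw [List.count_append, List.length_append]
    have hsplit : Finset.range (l.length + 1) = insert l.length (Finset.range l.length) :=
      Finset.range_add_one
    have hcongr : (Finset.range l.length).filter
        (fun i => (l ++ [a]).getD i 0 = k) =
        (Finset.range l.length).filter (fun i => l.getD i 0 = k) := by
      apply Finset.filter_congr
      intro i hi
      rw [List.getD_append _ _ _ _ (Finset.mem_range.mp hi)]
    rw [show (List.length [a]) = 1 from rfl, hsplit, Finset.filter_insert, hcongr]
    have hlast : (l ++ [a]).getD l.length 0 = a := by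
      rw [List.getD_append_right _ _ _ _ (le_refl _)]
      simp
    by_cases ha : a = k
    · rw [if_pos (by rw [hlast, ha]), Finset.card_insert_of_notMem
        (fun hmem => by have := Finset.mem_range.mp (Finset.mem_filter.mp hmem).1; omega)]
      rw [ihl, ha]
      simp
    · rw [if_neg (by rw [hlast]; exact ha), ihl]
      have hz : List.count k [a] = 0 :=
        List.count_eq_zero.mpr (fun h => ha (List.mem_singleton.mp h).symm)
      rw [hz, add_zero]




lemma arc_ex (i : ℕ) : ∃ t : ℕ, i < t * (t + 1) / 2 := by
  refine ⟨i + 1, ?_⟩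
  have : (i + 1) * (i + 1 + 1) = i * i + 3 * i + 2 := by ring
  omega

lemma arcTerm_eq_find (i : ℕ) : arcTerm i = 1 / ((Nat.find (arc_ex i) : ℕ) : ℝ) := rfl

lemma find_pos (i : ℕ) : 0 < Nat.find (arc_ex i) := by
  rcases Nat.eq_zero_or_pos (Nat.find (arc_ex i)) with h0 | h0
  · have := Nat.find_spec (arc_ex i)
    rw [h0] at this
    simp at this
  · exact h0

lemma arcTerm_pos (i : ℕ) : 0 < arcTerm i := by
  rw [arcTerm_eq_find]
  have := find_pos i
  positivity

lemma arcTerm_nonneg (i : ℕ) : 0 ≤ arcTerm i := le_of_lt (arcTerm_pos i)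

lemma arcTerm_ge {i D : ℕ} (hD : 0 < D) (h : i < D * (D + 1) / 2) :
    (1 : ℝ) / (D : ℝ) ≤ arcTerm i := by
  rw [arcTerm_eq_find]
  have hle : Nat.find (arc_ex i) ≤ D := Nat.find_min' _ h
  have hpos : (0 : ℝ) < ((Nat.find (arc_ex i) : ℕ) : ℝ) := by
    exact_mod_cast find_pos i
  exact one_div_le_one_div_of_le hpos (by exact_mod_cast hle)

lemma sum_inv_le_arcsum (N : ℕ) : ∀ (S : Finset ℕ) (d : ℕ → ℕ), S.card = N →
    (∀ i ∈ S, 1 ≤ d i) →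
    (∀ D : ℕ, 2 * (S.filter fun i => d i ≤ D).card ≤ D * (D + 1)) →
    ∑ i ∈ S, (1 : ℝ) / (d i : ℝ) ≤ ∑ j ∈ Finset.range N, arcTerm j := by
  induction N with
  | zero =>
    intro S d hc _ _
    rw [Finset.card_eq_zero.mp hc]
    simp
  | succ N ih =>
    intro S d hc h1 h2
    have hne : S.Nonempty := Finset.card_pos.mp (by omega)
    obtain ⟨b, hb, hmax⟩ := Finset.exists_max_image S d hne
    have hS' : (S.erase b).card = N := by rw [Finset.card_erase_of_mem hb, hc]; omega
    have ih' := ih (S.erase b) d hS'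
      (fun i hi => h1 i (Finset.mem_of_mem_erase hi))
      (fun D => le_trans (Nat.mul_le_mul_left 2
        (Finset.card_le_card (Finset.filter_subset_filter _ (Finset.erase_subset _ _)))) (h2 D))
    rw [← Finset.sum_erase_add S _ hb, Finset.sum_range_succ]
    have hdb : N < d b * (d b + 1) / 2 := by
      have h2b := h2 (d b)
      have hfe : S.filter (fun i => d i ≤ d b) = S :=
        Finset.filter_true_of_mem (fun i hi => hmax i hi)
      rw [hfe, hc] at h2b
      omega
    have harc : (1 : ℝ) / (d b : ℝ) ≤ arcTerm N := arcTerm_ge (h1 b hb) hdb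
    exact add_le_add ih' harc


section Main

variable {l : List ℕ} {π₀ : Equiv.Perm (Fin n)} {k : ℕ}
variable (hprod : (l.map (sgen n)).prod = π₀)
variable (hmin : ∀ l' : List ℕ, (l'.map (sgen n)).prod = π₀ → l.length ≤ l'.length)
variable (hk1 : 0 < k) (hkn : k < n)

include hprod hmin hk1 hkn in
lemma main_count :
    (l.count k : ℝ) ≤ (∑ j ∈ Finset.range k, arcTerm j) * ((n : ℝ) - 1) := by
  classical
  have hyx_all : ∀ i ∈ (Finset.range l.length).filter fun i => l.getD i 0 = k,
      (Pp n l i ⟨k - 1, by omega⟩).val < (Pp n l i ⟨k, hkn⟩).val := by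
    intro i hiT
    obtain ⟨hi, hq⟩ := Finset.mem_filter.mp hiT
    obtain ⟨x, y, hyx, -, -, -, hxv, hyv⟩ :=
      Lset_step_k hprod hmin hk1 hkn i (Finset.mem_range.mp hi) hq
    omega
  have hone : ∀ i ∈ (Finset.range l.length).filter fun i => l.getD i 0 = k,
      ∑ v ∈ Finset.Icc 1 (n - 1),
        (if (Pp n l i ⟨k - 1, by omega⟩).val < v ∧ v ≤ (Pp n l i ⟨k, hkn⟩).val then
          (1 : ℝ) / (((Pp n l i ⟨k, hkn⟩).val - (Pp n l i ⟨k - 1, by omega⟩).val : ℕ) : ℝ)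
        else 0) = 1 := by
    intro i hiT
    have hyx := hyx_all i hiT
    rw [Finset.sum_ite, Finset.sum_const_zero, add_zero, Finset.sum_const, nsmul_eq_mul]
    have hxlt : (Pp n l i ⟨k, hkn⟩).val < n := (Pp n l i ⟨k, hkn⟩).isLt
    have hfe : (Finset.Icc 1 (n - 1)).filter
        (fun v => (Pp n l i ⟨k - 1, by omega⟩).val < v ∧ v ≤ (Pp n l i ⟨k, hkn⟩).val) =
        Finset.Icc ((Pp n l i ⟨k - 1, by omega⟩).val + 1) ((Pp n l i ⟨k, hkn⟩).val) := by
      ext v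
      simp only [Finset.mem_filter, Finset.mem_Icc]
      omega
    rw [hfe, Nat.card_Icc]
    rw [show (Pp n l i ⟨k, hkn⟩).val + 1 - ((Pp n l i ⟨k - 1, by omega⟩).val + 1) =
      (Pp n l i ⟨k, hkn⟩).val - (Pp n l i ⟨k - 1, by omega⟩).val from by omega]
    rw [mul_one_div, div_self (Nat.cast_ne_zero.mpr (by omega))]
  have hswap : (l.count k : ℝ) = ∑ v ∈ Finset.Icc 1 (n - 1),
      ∑ i ∈ (Finset.range l.length).filter fun i => l.getD i 0 = k,
        (if (Pp n l i ⟨k - 1, by omega⟩).val < v ∧ v ≤ (Pp n l i ⟨k, hkn⟩).val then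
          (1 : ℝ) / (((Pp n l i ⟨k, hkn⟩).val - (Pp n l i ⟨k - 1, by omega⟩).val : ℕ) : ℝ)
        else 0) := by
    rw [Finset.sum_comm, count_eq_card l k]
    rw [Finset.sum_congr rfl hone]
    simp
  have hv_bound : ∀ v ∈ Finset.Icc 1 (n - 1),
      (∑ i ∈ (Finset.range l.length).filter fun i => l.getD i 0 = k,
        (if (Pp n l i ⟨k - 1, by omega⟩).val < v ∧ v ≤ (Pp n l i ⟨k, hkn⟩).val then
          (1 : ℝ) / (((Pp n l i ⟨k, hkn⟩).val - (Pp n l i ⟨k - 1, by omega⟩).val : ℕ) : ℝ)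
        else 0)) ≤ ∑ j ∈ Finset.range k, arcTerm j := by
    intro v hv
    rw [← Finset.sum_filter]
    have hSv := Sv_card hprod hmin hk1 hkn v
    have h1 : ∀ i ∈ ((Finset.range l.length).filter fun i => l.getD i 0 = k).filter
        (fun i => (Pp n l i ⟨k - 1, by omega⟩).val < v ∧ v ≤ (Pp n l i ⟨k, hkn⟩).val),
        1 ≤ (Pp n l i ⟨k, hkn⟩).val - (Pp n l i ⟨k - 1, by omega⟩).val := by
      intro i hiS
      have := hyx_all i (Finset.mem_filter.mp hiS).1
      omega
    have h2 := fun D => Sv_filter_d hprod hmin hk1 hkn v D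
    have harc := sum_inv_le_arcsum _
      (((Finset.range l.length).filter fun i => l.getD i 0 = k).filter
        (fun i => (Pp n l i ⟨k - 1, by omega⟩).val < v ∧ v ≤ (Pp n l i ⟨k, hkn⟩).val))
      (fun i => (Pp n l i ⟨k, hkn⟩).val - (Pp n l i ⟨k - 1, by omega⟩).val)
      rfl h1 h2
    refine le_trans harc ?_
    apply Finset.sum_le_sum_of_subset_of_nonneg
    · exact Finset.range_subset_range.mpr hSv
    · intro j _ _
      exact arcTerm_nonneg j
  have hn1 : 1 ≤ n := by omega
  calc (l.count k : ℝ)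
      = _ := hswap
    _ ≤ ∑ _v ∈ Finset.Icc 1 (n - 1), ∑ j ∈ Finset.range k, arcTerm j :=
        Finset.sum_le_sum hv_bound
    _ = ((n - 1 : ℕ) : ℝ) * ∑ j ∈ Finset.range k, arcTerm j := by
        rw [Finset.sum_const, Nat.card_Icc, nsmul_eq_mul]
        norm_num
    _ = (∑ j ∈ Finset.range k, arcTerm j) * ((n : ℝ) - 1) := by
        rw [Nat.cast_sub hn1]
        push_cast
        ring

end Main

end S5

theorem stmt5 (k n : ℕ) (hk : 1 ≤ k) (hkn : k ≤ n - 1) :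
    (Mmax k n : ℝ) ≤ (∑ i ∈ Finset.range k, arcTerm i) * n := by
  have hn2 : 2 ≤ n := by omega
  have hkn' : k < n := by omega
  have hH0 : 0 ≤ ∑ i ∈ Finset.range k, arcTerm i :=
    Finset.sum_nonneg fun j _ => S5.arcTerm_nonneg j
  have hRHS0 : (0 : ℝ) ≤ (∑ i ∈ Finset.range k, arcTerm i) * n :=
    mul_nonneg hH0 (Nat.cast_nonneg n)
  have key : ∀ N ∈ {N | ∃ l : List ℕ,
      IsReducedWordFor n l (longestPerm n) ∧ l.count k = N},
      (N : ℝ) ≤ (∑ i ∈ Finset.range k, arcTerm i) * n := by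
    rintro N ⟨l, ⟨hprod, hmin⟩, rfl⟩
    have hmc := S5.main_count (π₀ := longestPerm n) hprod hmin hk hkn'
    refine le_trans hmc ?_
    have hle : (n : ℝ) - 1 ≤ (n : ℝ) := by linarith
    exact mul_le_mul_of_nonneg_left hle hH0
  rw [Mmax]
  rcases Set.eq_empty_or_nonempty {N | ∃ l : List ℕ,
      IsReducedWordFor n l (longestPerm n) ∧ l.count k = N} with he | hne
  · rw [he, csSup_empty]
    simpa using hRHS0
  · have h1 : sSup {N | ∃ l : List ℕ,
        IsReducedWordFor n l (longestPerm n) ∧ l.count k = N} ≤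
        ⌊(∑ i ∈ Finset.range k, arcTerm i) * n⌋₊ :=
      csSup_le hne fun N hN => Nat.le_floor (key N hN)
    calc ((sSup {N | ∃ l : List ℕ,
        IsReducedWordFor n l (longestPerm n) ∧ l.count k = N} : ℕ) : ℝ)
        ≤ (⌊(∑ i ∈ Finset.range k, arcTerm i) * n⌋₊ : ℝ) := Nat.cast_le.mpr h1
      _ ≤ (∑ i ∈ Finset.range k, arcTerm i) * n := Nat.floor_le hRHS0
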